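/- The odd fermionic symmetry generators of the periodic gl(1|1) spin chain commute with all periodic Temperley–Lieb generators: for every n ≥ 0 with 2n+1 ≤ N and every 1 ≤ j ≤ N (periodic convention), [e_j, F_(2n+1)] = 0 and [e_j, F†_(2n+1)] = 0; moreover e_j F_(N) = F_(N) e_j = 0 and e_j F†_(N) = F†_(N) e_j = 0 for every 1 ≤ j ≤ N, where F_(N) = f_1 f_2 ⋯ f_N and F†_(N) = f_1† f_2† ⋯ f_N†. -/

import Mathlib

open Complex Matrix

noncomputable section

namespace SpinChain

/-- The state space of the `N`-site spin chain, `(ℂ²)^{⊗N}` realised as functions on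
spin configurations. -/
abbrev V (N : ℕ) := (Fin N → Fin 2) → ℂ

/-- Operators on the spin chain, realised as matrices. -/
abbrev Op (N : ℕ) := Matrix (Fin N → Fin 2) (Fin N → Fin 2) ℂ

def sigmaX : Matrix (Fin 2) (Fin 2) ℂ := !![0, 1; 1, 0]
def sigmaY : Matrix (Fin 2) (Fin 2) ℂ := !![0, -I; I, 0]
def sigmaZ : Matrix (Fin 2) (Fin 2) ℂ := !![1, 0; 0, -1]
def sigmaPlus : Matrix (Fin 2) (Fin 2) ℂ := ((1 : ℂ)/2) • (sigmaX + I • sigmaY)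
def sigmaMinus : Matrix (Fin 2) (Fin 2) ℂ := ((1 : ℂ)/2) • (sigmaX - I • sigmaY)

variable (N : ℕ)

/-- The operator acting as the 2×2 matrix `a` on the `j`-th tensor factor and as the
identity on the others. -/
def site (a : Matrix (Fin 2) (Fin 2) ℂ) (j : Fin N) : Op N :=
  Matrix.of fun x y =>
    a (x j) (y j) * ∏ k ∈ Finset.univ.filter (fun k => k ≠ j), (if x k = y k then (1 : ℂ) else 0)

/-- Jordan–Wigner string `∏_{k<j} diag(z 0, z 1)_k`. -/
def string (z : Fin 2 → ℂ) (j : Fin N) : Op N :=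
  (((List.finRange N).filter (fun k => decide (k < j))).map
    (fun k => site N (Matrix.diagonal z) k)).prod

/-- Jordan–Wigner fermion `c_j := i^{1−j}·(∏_{k<j} diag(−i,i)_k)·σ⁻_j`; here the index
`j : Fin N` labels the physical site `j+1`. -/
def c (j : Fin N) : Op N :=
  (I ^ (-(j : ℤ))) • (string N ![-I, I] j * site N sigmaMinus j)

/-- Jordan–Wigner fermion `c_j† := i^{j−1}·(∏_{k<j} diag(i,−i)_k)·σ⁺_j`. -/
def cd (j : Fin N) : Op N :=
  (I ^ ((j : ℕ))) • (string N ![I, -I] j * site N sigmaPlus j)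

/-- The `gl(1|1)` fermion `f_j := i^j c_j` (physical index `j = j.val + 1`). -/
def f (j : Fin N) : Op N := (I ^ ((j : ℕ) + 1)) • c N j

/-- The `gl(1|1)` fermion `f_j† := i^j c_j†`. -/
def fd (j : Fin N) : Op N := (I ^ ((j : ℕ) + 1)) • cd N j

/-- Cyclic successor on site indices. -/
def fsucc {N : ℕ} (j : Fin N) : Fin N := ⟨(j.val + 1) % N, Nat.mod_lt _ j.pos⟩

/-- Periodic Temperley–Lieb generators
`e_j = (f_j+f_{j+1})(f_j†+f_{j+1}†)`, with `e_N = (f_N+f_1)(f_N†+f_1†)`. -/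
def e (j : Fin N) : Op N := (f N j + f N (fsucc j)) * (fd N j + fd N (fsucc j))

/-- `F_(m) := Σ_{j_1<⋯<j_m} f_{j_1}⋯f_{j_m}`. -/
def Fg (m : ℕ) : Op N :=
  ∑ s ∈ Finset.univ.powersetCard m, ((s.sort (· ≤ ·)).map (f N)).prod

/-- `F†_(m) := Σ_{j_1<⋯<j_m} f†_{j_1}⋯f†_{j_m}`. -/
def Fdg (m : ℕ) : Op N :=
  ∑ s ∈ Finset.univ.powersetCard m, ((s.sort (· ≤ ·)).map (fd N)).prod

/-- `S^z := (1/2) Σ_j σ^z_j`. -/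
def Sz : Op N := ((1 : ℂ)/2) • ∑ j : Fin N, site N sigmaZ j


/-! ### Tensor-product (local operator) machinery -/

/-- Tensor product of single-site matrices. -/
def loc (a : Fin N → Matrix (Fin 2) (Fin 2) ℂ) : Op N :=
  Matrix.of fun x y => ∏ k, a k (x k) (y k)

lemma loc_mul (a b : Fin N → Matrix (Fin 2) (Fin 2) ℂ) :
    loc N a * loc N b = loc N (fun k => a k * b k) := by
  ext x z
  simp only [Matrix.mul_apply, loc, Matrix.of_apply]
  rw [Finset.prod_univ_sum, Fintype.piFinset_univ]
  exact Finset.sum_congr rfl fun y _ => (Finset.prod_mul_distrib).symm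

lemma loc_one : loc N (fun _ => (1 : Matrix (Fin 2) (Fin 2) ℂ)) = 1 := by
  ext x y
  simp only [loc, Matrix.of_apply, Matrix.one_apply]
  by_cases h : x = y
  · subst h
    rw [if_pos rfl]
    exact Finset.prod_eq_one fun k _ => if_pos rfl
  · have hex : ∃ k, x k ≠ y k := by
      by_contra hc
      push_neg at hc
      exact h (funext hc)
    obtain ⟨k, hk⟩ := hex
    rw [if_neg h]
    exact Finset.prod_eq_zero (Finset.mem_univ k) (if_neg hk)

lemma loc_zero_slot (a : Fin N → Matrix (Fin 2) (Fin 2) ℂ) (j : Fin N) (h : a j = 0) :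
    loc N a = 0 := by
  ext x y
  simp only [loc, Matrix.of_apply, Matrix.zero_apply]
  exact Finset.prod_eq_zero (Finset.mem_univ j) (by rw [h]; rfl)

lemma loc_eq_smul (a b : Fin N → Matrix (Fin 2) (Fin 2) ℂ) (c : Fin N → ℂ)
    (h : ∀ k, a k = c k • b k) :
    loc N a = (∏ k, c k) • loc N b := by
  ext x y
  simp only [loc, Matrix.of_apply, Matrix.smul_apply, smul_eq_mul]
  rw [← Finset.prod_mul_distrib]
  exact Finset.prod_congr rfl fun k _ => by rw [h k]; rfl

lemma loc_add_slot (a b cc : Fin N → Matrix (Fin 2) (Fin 2) ℂ) (j : Fin N)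
    (h : ∀ k, k ≠ j → a k = cc k ∧ b k = cc k) (hj : a j + b j = cc j) :
    loc N a + loc N b = loc N cc := by
  ext x y
  simp only [loc, Matrix.of_apply, Matrix.add_apply]
  rw [← Finset.mul_prod_erase _ _ (Finset.mem_univ j),
      ← Finset.mul_prod_erase _ _ (Finset.mem_univ j),
      ← Finset.mul_prod_erase _ (fun k => cc k (x k) (y k)) (Finset.mem_univ j)]
  have h2 : ∀ g : Fin N → ℂ, ∀ k ∈ Finset.univ.erase j, (fun k => a k (x k) (y k)) k = 0 → True := by
    intro _ _ _ _; trivial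
  have ea : ∏ k ∈ Finset.univ.erase j, a k (x k) (y k)
      = ∏ k ∈ Finset.univ.erase j, cc k (x k) (y k) :=
    Finset.prod_congr rfl fun k hk => by rw [(h k (Finset.mem_erase.mp hk).1).1]
  have eb : ∏ k ∈ Finset.univ.erase j, b k (x k) (y k)
      = ∏ k ∈ Finset.univ.erase j, cc k (x k) (y k) :=
    Finset.prod_congr rfl fun k hk => by rw [(h k (Finset.mem_erase.mp hk).1).2]
  rw [ea, eb, ← add_mul, ← Matrix.add_apply, hj]

lemma loc_transpose (a : Fin N → Matrix (Fin 2) (Fin 2) ℂ) :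
    (loc N a)ᵀ = loc N (fun k => (a k)ᵀ) := by
  ext x y
  simp [loc, Matrix.transpose_apply]
/-! ### Explicit 2×2 matrix facts -/

/-- The single-site Jordan–Wigner string matrix `diag(-i, i)`. -/
def Dm : Matrix (Fin 2) (Fin 2) ℂ := Matrix.diagonal ![-I, I]

lemma Dm_eq : Dm = !![-I, 0; 0, I] := by
  ext i j
  fin_cases i <;> fin_cases j <;> simp [Dm, Matrix.diagonal]

lemma sigmaMinus_eq : sigmaMinus = !![0, 0; 1, 0] := by
  ext i j
  fin_cases i <;> fin_cases j <;>
    simp [sigmaMinus, sigmaX, sigmaY, Complex.I_mul_I] <;> ring_nf <;>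
    simp [Complex.I_sq] <;> ring

lemma sigmaPlus_eq : sigmaPlus = !![0, 1; 0, 0] := by
  ext i j
  fin_cases i <;> fin_cases j <;>
    simp [sigmaPlus, sigmaX, sigmaY, Complex.I_mul_I] <;> ring_nf <;>
    simp [Complex.I_sq] <;> ring

lemma Dm_mul_Dm : Dm * Dm = (-1 : ℂ) • 1 := by
  rw [Dm_eq]
  ext i j
  fin_cases i <;> fin_cases j <;>
    simp [Matrix.mul_fin_two, Complex.I_mul_I, Matrix.one_apply] <;> ring

lemma sm_mul_sm : sigmaMinus * sigmaMinus = 0 := by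
  rw [sigmaMinus_eq]
  ext i j
  fin_cases i <;> fin_cases j <;> simp [Matrix.mul_fin_two]

lemma sp_mul_sp : sigmaPlus * sigmaPlus = 0 := by
  rw [sigmaPlus_eq]
  ext i j
  fin_cases i <;> fin_cases j <;> simp [Matrix.mul_fin_two]

lemma sm_mul_Dm : sigmaMinus * Dm = (-1 : ℂ) • (Dm * sigmaMinus) := by
  rw [sigmaMinus_eq, Dm_eq]
  ext i j
  fin_cases i <;> fin_cases j <;> simp [Matrix.mul_fin_two] <;> ring

lemma sp_mul_Dm : sigmaPlus * Dm = (-1 : ℂ) • (Dm * sigmaPlus) := by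
  rw [sigmaPlus_eq, Dm_eq]
  ext i j
  fin_cases i <;> fin_cases j <;> simp [Matrix.mul_fin_two] <;> ring

lemma sm_sp_add_sp_sm : sigmaMinus * sigmaPlus + sigmaPlus * sigmaMinus = 1 := by
  rw [sigmaMinus_eq, sigmaPlus_eq]
  ext i j
  fin_cases i <;> fin_cases j <;>
    simp [Matrix.mul_fin_two, Matrix.one_apply]

lemma Dm_transpose : Dmᵀ = Dm := by
  rw [Dm_eq]
  ext i j
  fin_cases i <;> fin_cases j <;> simp

lemma sm_transpose : sigmaMinusᵀ = sigmaPlus := by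
  rw [sigmaMinus_eq, sigmaPlus_eq]
  ext i j
  fin_cases i <;> fin_cases j <;> simp

lemma sp_transpose : sigmaPlusᵀ = sigmaMinus := by
  rw [sigmaMinus_eq, sigmaPlus_eq]
  ext i j
  fin_cases i <;> fin_cases j <;> simp
/-! ### Jordan–Wigner operators as local operators -/

lemma site_eq_loc (a : Matrix (Fin 2) (Fin 2) ℂ) (j : Fin N) :
    site N a j = loc N (fun k => if k = j then a else 1) := by
  ext x y
  simp only [site, loc, Matrix.of_apply]
  rw [← Finset.mul_prod_erase _ (fun k => (if k = j then a else 1) (x k) (y k))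
      (Finset.mem_univ j)]
  rw [if_pos rfl]
  congr 1
  rw [show Finset.univ.filter (fun k => k ≠ j) = Finset.univ.erase j by
    ext k; simp [Finset.mem_erase, and_comm]]
  refine Finset.prod_congr rfl fun k hk => ?_
  rw [if_neg (Finset.mem_erase.mp hk).1, Matrix.one_apply]

lemma list_site_prod (z : Fin 2 → ℂ) (l : List (Fin N)) (hl : l.Nodup) :
    (l.map (fun k => site N (Matrix.diagonal z) k)).prod
      = loc N (fun k => if k ∈ l then Matrix.diagonal z else 1) := by
  induction l with
  | nil =>
      simp only [List.map_nil, List.prod_nil, List.not_mem_nil, if_false]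
      exact (loc_one N).symm
  | cons a l ih =>
      obtain ⟨ha, hl'⟩ := List.nodup_cons.mp hl
      rw [List.map_cons, List.prod_cons, site_eq_loc, ih hl', loc_mul]
      refine congrArg (loc N) (funext fun k => ?_)
      by_cases h1 : k = a
      · subst h1
        rw [if_pos rfl, if_neg ha, if_pos (List.mem_cons_self (a := k) (l := l)), mul_one]
      · by_cases h2 : k ∈ l
        · rw [if_neg h1, if_pos h2, if_pos (List.mem_cons_of_mem a h2), one_mul]
        · rw [if_neg h1, if_neg h2, if_neg (by simp [h1, h2]), one_mul]

lemma string_eq_loc (z : Fin 2 → ℂ) (j : Fin N) :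
    string N z j = loc N (fun k => if k < j then Matrix.diagonal z else 1) := by
  rw [string, list_site_prod N z _ (List.Nodup.filter _ (List.nodup_finRange N))]
  refine congrArg (loc N) (funext fun k => ?_)
  by_cases h : k < j <;> simp [List.mem_filter, List.mem_finRange, h]

/-- The local-factor profile of `f j`. -/
def Af (j : Fin N) : Fin N → Matrix (Fin 2) (Fin 2) ℂ := fun k =>
  if k < j then Dm else if k = j then sigmaMinus else 1

/-- The local-factor profile of `fd j`. -/
def Afd (j : Fin N) : Fin N → Matrix (Fin 2) (Fin 2) ℂ := fun k =>
  if k < j then Dm else if k = j then sigmaPlus else 1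

lemma f_eq_loc (j : Fin N) : f N j = I • loc N (Af N j) := by
  rw [f, c, string_eq_loc, site_eq_loc, loc_mul, smul_smul]
  have hsc : (I : ℂ) ^ ((j : ℕ) + 1) * I ^ (-(j : ℤ)) = I := by
    rw [_root_.zpow_neg, zpow_natCast, pow_succ, mul_comm (I ^ (j : ℕ)) I, mul_assoc,
      mul_inv_cancel₀ (pow_ne_zero _ Complex.I_ne_zero), mul_one]
  rw [hsc]
  refine congrArg (I • ·) (congrArg (loc N) (funext fun k => ?_))
  by_cases h1 : k < j
  · simp [Af, h1, ne_of_lt h1, Dm]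
  · by_cases h2 : k = j <;> simp [Af, h1, h2]

lemma diagonal_II : (Matrix.diagonal ![I, -I] : Matrix (Fin 2) (Fin 2) ℂ) = (-1 : ℂ) • Dm := by
  ext i j
  fin_cases i <;> fin_cases j <;> simp [Dm, Matrix.diagonal]

lemma card_filter_lt (j : Fin N) : (Finset.univ.filter (fun k => k < j)).card = (j : ℕ) := by
  rw [show Finset.univ.filter (fun k => k < j) = Finset.Iio j by ext k; simp]
  exact Fin.card_Iio j

lemma fd_eq_loc (j : Fin N) : fd N j = I • loc N (Afd N j) := by
  rw [fd, cd, string_eq_loc, site_eq_loc, loc_mul, smul_smul]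
  have hpt : (fun k => (if k < j then (Matrix.diagonal ![I, -I] : Matrix (Fin 2) (Fin 2) ℂ) else 1)
        * (if k = j then sigmaPlus else 1))
      = fun k => (if k < j then (-1 : ℂ) else 1) • Afd N j k := by
    funext k
    by_cases h1 : k < j
    · simp [Afd, h1, ne_of_lt h1, diagonal_II]
    · by_cases h2 : k = j <;> simp [Afd, h1, h2]
  rw [hpt, loc_eq_smul N _ (Afd N j) _ (fun k => rfl), smul_smul]
  congr 1
  have hprod : (∏ k : Fin N, (if k < j then (-1 : ℂ) else 1)) = (-1 : ℂ) ^ (j : ℕ) := by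
    rw [Finset.prod_ite (fun _ => (-1 : ℂ)) (fun _ => (1 : ℂ)), Finset.prod_const,
      Finset.prod_const, one_pow, mul_one, card_filter_lt]
  rw [hprod, ← Complex.I_sq, ← pow_mul]
  rw [← pow_add, ← pow_add]
  rw [show (j : ℕ) + 1 + (j : ℕ) + 2 * (j : ℕ) = 4 * (j : ℕ) + 1 by ring]
  rw [pow_succ, pow_mul, Complex.I_pow_four, one_pow, one_mul]
/-! ### Canonical anticommutation relations -/

lemma prod_if_lt (j : Fin N) :
    (∏ m : Fin N, (if m < j then (-1 : ℂ) else 1)) = (-1 : ℂ) ^ (j : ℕ) := by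
  rw [Finset.prod_ite (fun _ => (-1 : ℂ)) (fun _ => (1 : ℂ)), Finset.prod_const,
    Finset.prod_const, one_pow, mul_one, card_filter_lt]

lemma f_mul_f (j k : Fin N) (hjk : j < k) : f N j * f N k = -(f N k * f N j) := by
  rw [f_eq_loc, f_eq_loc, smul_mul_smul_comm, smul_mul_smul_comm, loc_mul, loc_mul]
  have h : loc N (fun m => Af N j m * Af N k m)
      = (∏ m : Fin N, (if m = j then (-1 : ℂ) else 1)) • loc N (fun m => Af N k m * Af N j m) := by
    refine loc_eq_smul N _ _ _ fun m => ?_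
    by_cases h1 : m < j
    · simp [Af, h1, h1.trans hjk, ne_of_lt h1]
    · by_cases h2 : m = j
      · subst h2
        simpa [Af, h1, hjk] using sm_mul_Dm
      · by_cases h3 : m < k
        · simp [Af, h1, h2, h3, ne_of_lt h3]
        · by_cases h4 : m = k
          · subst h4; simp [Af, h1, h2, h3, hjk.not_gt, hjk.ne']
          · simp [Af, h1, h2, h3, h4]
  rw [h, Finset.prod_ite_eq' Finset.univ j (fun _ => (-1 : ℂ))]
  simp

lemma fd_mul_fd (j k : Fin N) (hjk : j < k) : fd N j * fd N k = -(fd N k * fd N j) := by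
  rw [fd_eq_loc, fd_eq_loc, smul_mul_smul_comm, smul_mul_smul_comm, loc_mul, loc_mul]
  have h : loc N (fun m => Afd N j m * Afd N k m)
      = (∏ m : Fin N, (if m = j then (-1 : ℂ) else 1)) • loc N (fun m => Afd N k m * Afd N j m) := by
    refine loc_eq_smul N _ _ _ fun m => ?_
    by_cases h1 : m < j
    · simp [Afd, h1, h1.trans hjk, ne_of_lt h1]
    · by_cases h2 : m = j
      · subst h2
        simpa [Afd, h1, hjk] using sp_mul_Dm
      · by_cases h3 : m < k
        · simp [Afd, h1, h2, h3, ne_of_lt h3]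
        · by_cases h4 : m = k
          · subst h4; simp [Afd, h1, h2, h3, hjk.not_gt, hjk.ne']
          · simp [Afd, h1, h2, h3, h4]
  rw [h, Finset.prod_ite_eq' Finset.univ j (fun _ => (-1 : ℂ))]
  simp

lemma f_sq (j : Fin N) : f N j * f N j = 0 := by
  rw [f_eq_loc, smul_mul_smul_comm, loc_mul]
  rw [loc_zero_slot N _ j (by simp [Af, sm_mul_sm]), smul_zero]

lemma fd_sq (j : Fin N) : fd N j * fd N j = 0 := by
  rw [fd_eq_loc, smul_mul_smul_comm, loc_mul]
  rw [loc_zero_slot N _ j (by simp [Afd, sp_mul_sp]), smul_zero]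

lemma f_anti (j k : Fin N) : f N j * f N k = -(f N k * f N j) := by
  rcases lt_trichotomy j k with h | h | h
  · exact f_mul_f N j k h
  · subst h; rw [f_sq, neg_zero]
  · rw [f_mul_f N k j h, neg_neg]

lemma fd_anti (j k : Fin N) : fd N j * fd N k = -(fd N k * fd N j) := by
  rcases lt_trichotomy j k with h | h | h
  · exact fd_mul_fd N j k h
  · subst h; rw [fd_sq, neg_zero]
  · rw [fd_mul_fd N k j h, neg_neg]

lemma f_fd_ne (j k : Fin N) (hjk : j ≠ k) : f N j * fd N k = -(fd N k * f N j) := by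
  rw [f_eq_loc, fd_eq_loc, smul_mul_smul_comm, smul_mul_smul_comm, loc_mul, loc_mul]
  rcases lt_or_gt_of_ne hjk with h | h
  · have heq : loc N (fun m => Af N j m * Afd N k m)
        = (∏ m : Fin N, (if m = j then (-1 : ℂ) else 1)) •
          loc N (fun m => Afd N k m * Af N j m) := by
      refine loc_eq_smul N _ _ _ fun m => ?_
      by_cases h1 : m < j
      · simp [Af, Afd, h1, h1.trans h, ne_of_lt h1]
      · by_cases h2 : m = j
        · subst h2
          simpa [Af, Afd, h1, h] using sm_mul_Dm
        · by_cases h3 : m < k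
          · simp [Af, Afd, h1, h2, h3, ne_of_lt h3]
          · by_cases h4 : m = k
            · subst h4; simp [Af, Afd, h1, h2, h3, h.not_gt, h.ne']
            · simp [Af, Afd, h1, h2, h3, h4]
    rw [heq, Finset.prod_ite_eq' Finset.univ j (fun _ => (-1 : ℂ))]
    simp
  · have heq : loc N (fun m => Af N j m * Afd N k m)
        = (∏ m : Fin N, (if m = k then (-1 : ℂ) else 1)) •
          loc N (fun m => Afd N k m * Af N j m) := by
      refine loc_eq_smul N _ _ _ fun m => ?_
      by_cases h1 : m < k
      · simp [Af, Afd, h1, h1.trans h, ne_of_lt h1]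
      · by_cases h2 : m = k
        · subst h2
          have : (Dm * sigmaPlus) = (-1 : ℂ) • (sigmaPlus * Dm) := by
            rw [sp_mul_Dm, smul_smul]; norm_num
          simpa [Af, Afd, h1, h] using this
        · by_cases h3 : m < j
          · simp [Af, Afd, h1, h2, h3, ne_of_lt h3]
          · by_cases h4 : m = j
            · subst h4; simp [Af, Afd, h1, h2, h3, h.not_gt, h.ne']
            · simp [Af, Afd, h1, h2, h3, h4]
    rw [heq, Finset.prod_ite_eq' Finset.univ k (fun _ => (-1 : ℂ))]
    simp

lemma f_fd_same (j : Fin N) :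
    f N j * fd N j + fd N j * f N j = ((-1 : ℂ) ^ ((j : ℕ) + 1)) • 1 := by
  rw [f_eq_loc, fd_eq_loc, smul_mul_smul_comm, smul_mul_smul_comm, loc_mul, loc_mul, ← smul_add]
  have hadd : loc N (fun m => Af N j m * Afd N j m) + loc N (fun m => Afd N j m * Af N j m)
      = loc N (fun m => if m < j then Dm * Dm else 1) := by
    refine loc_add_slot N _ _ _ j (fun m hm => ?_) ?_
    · constructor <;>
      · by_cases h1 : m < j <;> simp [Af, Afd, h1, hm]
    · simpa [Af, Afd] using sm_sp_add_sp_sm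
  rw [hadd]
  have hsc : loc N (fun m => if m < j then Dm * Dm else 1)
      = ((-1 : ℂ) ^ (j : ℕ)) • (1 : Op N) := by
    rw [loc_eq_smul N _ (fun _ => 1) (fun m => if m < j then (-1 : ℂ) else 1)
      (fun m => by by_cases h1 : m < j <;> simp [h1, Dm_mul_Dm]), prod_if_lt, loc_one]
  rw [hsc, smul_smul, Complex.I_mul_I, pow_succ]
  ring_nf
/-! ### Transpose relations -/

lemma f_transpose (j : Fin N) : (f N j)ᵀ = fd N j := by
  rw [f_eq_loc, fd_eq_loc, Matrix.transpose_smul, loc_transpose]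
  refine congrArg _ (congrArg (loc N) (funext fun m => ?_))
  by_cases h1 : m < j
  · simp [Af, Afd, h1, Dm_transpose]
  · by_cases h2 : m = j <;> simp [Af, Afd, h1, h2, sm_transpose]

lemma fd_transpose (j : Fin N) : (fd N j)ᵀ = f N j := by
  rw [f_eq_loc, fd_eq_loc, Matrix.transpose_smul, loc_transpose]
  refine congrArg _ (congrArg (loc N) (funext fun m => ?_))
  by_cases h1 : m < j
  · simp [Af, Afd, h1, Dm_transpose]
  · by_cases h2 : m = j <;> simp [Af, Afd, h1, h2, sp_transpose]

/-! ### List-level fermion algebra -/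

/-- Product of `f`'s along a list. -/
def Pf (l : List (Fin N)) : Op N := (l.map (f N)).prod

/-- Product of `fd`'s along a list. -/
def Pd (l : List (Fin N)) : Op N := (l.map (fd N)).prod

/-- The fermionic derivative of a product of `f`'s in direction `k`. -/
def Yf (k : Fin N) : List (Fin N) → Op N
  | [] => 0
  | a :: l => (if a = k then Pf N l else 0) - f N a * Yf k l

@[simp] lemma Pf_nil : Pf N [] = 1 := rfl
@[simp] lemma Pf_cons (a : Fin N) (l : List (Fin N)) : Pf N (a :: l) = f N a * Pf N l := by
  simp [Pf]
@[simp] lemma Pd_nil : Pd N [] = 1 := rfl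
@[simp] lemma Pd_cons (a : Fin N) (l : List (Fin N)) : Pd N (a :: l) = fd N a * Pd N l := by
  simp [Pd]
@[simp] lemma Yf_nil (k : Fin N) : Yf N k [] = 0 := rfl
lemma Yf_cons (k a : Fin N) (l : List (Fin N)) :
    Yf N k (a :: l) = (if a = k then Pf N l else 0) - f N a * Yf N k l := rfl

lemma f_swap (k : Fin N) (l : List (Fin N)) :
    f N k * Pf N l = ((-1 : ℂ) ^ l.length) • (Pf N l * f N k) := by
  induction l with
  | nil => simp
  | cons a l ih =>
      rw [Pf_cons, ← mul_assoc, f_anti, neg_mul, mul_assoc, ih, List.length_cons, pow_succ]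
      simp only [mul_smul_comm, ← mul_assoc]
      module

lemma fd_swap (k : Fin N) (l : List (Fin N)) :
    fd N k * Pd N l = ((-1 : ℂ) ^ l.length) • (Pd N l * fd N k) := by
  induction l with
  | nil => simp
  | cons a l ih =>
      rw [Pd_cons, ← mul_assoc, fd_anti, neg_mul, mul_assoc, ih, List.length_cons, pow_succ]
      simp only [mul_smul_comm, ← mul_assoc]
      module

lemma f_swap' (k : Fin N) (l : List (Fin N)) :
    Pf N l * f N k = ((-1 : ℂ) ^ l.length) • (f N k * Pf N l) := by
  rw [f_swap, smul_smul, ← pow_add, ← two_mul, pow_mul, neg_one_sq, one_pow, one_smul]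

lemma f_mem_left (k : Fin N) (l : List (Fin N)) (h : k ∈ l) : f N k * Pf N l = 0 := by
  induction l with
  | nil => simp at h
  | cons a l ih =>
      rw [Pf_cons, ← mul_assoc]
      by_cases hk : k = a
      · subst hk; rw [f_sq, zero_mul]
      · rw [f_anti, neg_mul, mul_assoc, ih (List.mem_of_ne_of_mem hk h), mul_zero, neg_zero]

lemma f_mem_right (k : Fin N) (l : List (Fin N)) (h : k ∈ l) : Pf N l * f N k = 0 := by
  rw [f_swap', f_mem_left N k l h, smul_zero]

lemma Yf_not_mem (k : Fin N) (l : List (Fin N)) (h : k ∉ l) : Yf N k l = 0 := by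
  induction l with
  | nil => rfl
  | cons a l ih =>
      rw [Yf_cons, if_neg (fun he => h (by rw [← he]; exact List.mem_cons_self (a := a) (l := l))),
        ih (fun hm => h (List.mem_cons_of_mem a hm)), mul_zero, sub_zero]

lemma f_mul_Yf_self (k : Fin N) (l : List (Fin N)) (h : k ∈ l) :
    f N k * Yf N k l = Pf N l := by
  induction l with
  | nil => simp at h
  | cons a l ih =>
      rw [Yf_cons, mul_sub]
      by_cases hk : a = k
      · subst hk
        rw [if_pos rfl, ← mul_assoc, f_sq, zero_mul, sub_zero, Pf_cons]
      · have hkl : k ∈ l := List.mem_of_ne_of_mem (fun he => hk he.symm) h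
        rw [if_neg hk, mul_zero, zero_sub, ← mul_assoc, f_anti, neg_mul, neg_neg, mul_assoc,
          ih hkl, Pf_cons]

lemma f_mul_Yf_ne (c k : Fin N) (l : List (Fin N)) (hc : c ∈ l) (hck : c ≠ k) :
    f N c * Yf N k l = 0 := by
  induction l with
  | nil => simp at hc
  | cons a l ih =>
      rw [Yf_cons, mul_sub]
      by_cases ha : a = k
      · subst ha
        have hcl : c ∈ l := List.mem_of_ne_of_mem hck hc
        rw [if_pos rfl, f_mem_left N c l hcl, ← mul_assoc, f_anti, neg_mul, mul_assoc,
          ih hcl, mul_zero, neg_zero, sub_zero]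
      · rw [if_neg ha, mul_zero, zero_sub, ← mul_assoc]
        by_cases hca : c = a
        · subst hca
          rw [f_sq, zero_mul, neg_zero]
        · rw [f_anti, neg_mul, mul_assoc]
          have hcl : c ∈ l := List.mem_of_ne_of_mem hca hc
          rw [ih hcl, mul_zero, neg_zero, neg_zero]

lemma fd_der (k : Fin N) (l : List (Fin N)) :
    fd N k * Pf N l = ((-1 : ℂ) ^ l.length) • (Pf N l * fd N k)
      + ((-1 : ℂ) ^ ((k : ℕ) + 1)) • Yf N k l := by
  induction l with
  | nil => simp
  | cons a l ih =>
      have hstep : fd N k * f N a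
          = -(f N a * fd N k) + (if a = k then ((-1 : ℂ) ^ ((k : ℕ) + 1)) • (1 : Op N) else 0) := by
        by_cases ha : a = k
        · subst ha
          rw [if_pos rfl]
          have h2 : fd N a * f N a = ((-1 : ℂ) ^ ((a : ℕ) + 1)) • (1 : Op N) - f N a * fd N a := by
            rw [← f_fd_same N a]; abel
          rw [h2]; abel
        · rw [if_neg ha, add_zero, f_fd_ne N a k ha, neg_neg]
      rw [Pf_cons, ← mul_assoc, hstep, add_mul, neg_mul, mul_assoc, ih]
      rw [Yf_cons, List.length_cons]
      simp only [ite_mul, zero_mul, smul_mul_assoc, one_mul, mul_add, smul_sub,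
        mul_smul_comm, mul_assoc]
      by_cases ha : a = k
      · simp only [if_pos ha, pow_succ]
        module
      · simp only [if_neg ha, pow_succ]
        module
/-! ### Sorted insertion -/

lemma f_ins (a : Fin N) (l : List (Fin N)) (hs : List.Pairwise (· ≤ ·) l) :
    f N a * Pf N l
      = ((-1 : ℂ) ^ (l.filter (fun x => decide (x < a))).length) •
        Pf N (l.orderedInsert (· ≤ ·) a) := by
  induction l with
  | nil => simp [List.orderedInsert]
  | cons x l ih =>
      obtain ⟨hxl, hl⟩ := List.pairwise_cons.mp hs
      by_cases h : a ≤ x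
      · have hfilter : (x :: l).filter (fun y => decide (y < a)) = [] := by
          rw [List.filter_eq_nil_iff]
          intro y hy
          simp only [decide_eq_true_eq]
          rcases List.mem_cons.mp hy with rfl | hyl
          · exact not_lt.mpr h
          · exact not_lt.mpr (le_trans h (hxl y hyl))
        rw [List.orderedInsert, if_pos h, hfilter]
        simp [Pf_cons]
      · have hxa : x < a := lt_of_not_ge h
        have hfilter : (x :: l).filter (fun y => decide (y < a))
            = x :: l.filter (fun y => decide (y < a)) := by
          rw [List.filter_cons, if_pos (by simpa using hxa)]
        rw [List.orderedInsert, if_neg h, hfilter, List.length_cons, Pf_cons, Pf_cons,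
          ← mul_assoc, f_anti, neg_mul, mul_assoc, ih hl, pow_succ]
        simp only [mul_smul_comm, ← mul_assoc]
        module

lemma Yf_ins (a : Fin N) (l : List (Fin N)) (hs : List.Pairwise (· ≤ ·) l) (ha : a ∉ l) :
    Yf N a (l.orderedInsert (· ≤ ·) a)
      = ((-1 : ℂ) ^ (l.filter (fun x => decide (x < a))).length) • Pf N l := by
  induction l with
  | nil => simp [List.orderedInsert, Yf_cons]
  | cons x l ih =>
      obtain ⟨hxl, hl⟩ := List.pairwise_cons.mp hs
      have hax : a ≠ x := fun he => ha (he ▸ List.mem_cons_self (a := x) (l := l))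
      have hal : a ∉ l := fun hm => ha (List.mem_cons_of_mem x hm)
      by_cases h : a ≤ x
      · have hfilter : (x :: l).filter (fun y => decide (y < a)) = [] := by
          rw [List.filter_eq_nil_iff]
          intro y hy
          simp only [decide_eq_true_eq]
          rcases List.mem_cons.mp hy with rfl | hyl
          · exact not_lt.mpr h
          · exact not_lt.mpr (le_trans h (hxl y hyl))
        rw [List.orderedInsert, if_pos h, hfilter, Yf_cons, if_pos rfl,
          Yf_not_mem N a _ ha, mul_zero, sub_zero]
        simp
      · have hxa : x < a := lt_of_not_ge h
        have hfilter : (x :: l).filter (fun y => decide (y < a))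
            = x :: l.filter (fun y => decide (y < a)) := by
          rw [List.filter_cons, if_pos (by simpa using hxa)]
        rw [List.orderedInsert, if_neg h, hfilter, List.length_cons, Yf_cons,
          if_neg (fun he => hax he.symm), ih hl hal, Pf_cons, pow_succ]
        simp only [mul_smul_comm, ← mul_assoc]
        module

lemma sort_insert_eq (a : Fin N) (K : Finset (Fin N)) (ha : a ∉ K) :
    (insert a K).sort (· ≤ ·) = (K.sort (· ≤ ·)).orderedInsert (· ≤ ·) a := by
  refine List.Perm.eq_of_pairwise' (Finset.pairwise_sort _ _)
    (List.Pairwise.orderedInsert a _ (Finset.pairwise_sort _ _)) ?_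
  have h1 : ((insert a K).sort (· ≤ ·) : Multiset (Fin N)) = ↑(a :: K.sort (· ≤ ·)) := by
    rw [Finset.sort_eq, Finset.insert_val_of_notMem ha, ← Multiset.cons_coe, Finset.sort_eq]
  exact (Multiset.coe_eq_coe.mp h1).trans (List.perm_orderedInsert _ _ _).symm

/-- The parity sign of inserting `a` into the sorted enumeration of `K`. -/
def sgn (a : Fin N) (K : Finset (Fin N)) : ℂ :=
  (-1) ^ ((K.sort (· ≤ ·)).filter (fun x => decide (x < a))).length

lemma sgn_mul_self (a : Fin N) (K : Finset (Fin N)) : sgn N a K * sgn N a K = 1 := by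
  rw [sgn, ← pow_add, ← two_mul, pow_mul, neg_one_sq, one_pow]

lemma f_ins_finset (a : Fin N) (K : Finset (Fin N)) (ha : a ∉ K) :
    f N a * Pf N (K.sort (· ≤ ·)) = sgn N a K • Pf N ((insert a K).sort (· ≤ ·)) := by
  rw [sort_insert_eq N a K ha, sgn]
  exact f_ins N a _ (Finset.pairwise_sort _ _)

lemma Yf_ins_finset (a : Fin N) (K : Finset (Fin N)) (ha : a ∉ K) :
    Yf N a ((insert a K).sort (· ≤ ·)) = sgn N a K • Pf N (K.sort (· ≤ ·)) := by
  rw [sort_insert_eq N a K ha, sgn]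
  exact Yf_ins N a _ (Finset.pairwise_sort _ _) (fun h => ha (Finset.mem_sort _ |>.mp h))
/-! ### The main combinatorial cancellation -/

lemma main_sum (m : ℕ) (hm : 1 ≤ m) (a b : Fin N) (hab : a ≠ b)
    (Hσ : ∀ K : Finset (Fin N), K.card = m - 1 → a ∉ K → b ∉ K → sgn N a K = sgn N b K) :
    ∑ S ∈ Finset.univ.powersetCard m,
      ((f N a + f N b) * (Yf N a (S.sort (· ≤ ·)) - Yf N b (S.sort (· ≤ ·)))) = 0 := by
  classical
  have hz : ∀ S : Finset (Fin N), (a ∈ S ↔ b ∈ S) →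
      (f N a + f N b) * (Yf N a (S.sort (· ≤ ·)) - Yf N b (S.sort (· ≤ ·))) = 0 := by
    intro S hiff
    by_cases ha : a ∈ S
    · have hb : b ∈ S := hiff.mp ha
      have hal : a ∈ S.sort (· ≤ ·) := (Finset.mem_sort _).mpr ha
      have hbl : b ∈ S.sort (· ≤ ·) := (Finset.mem_sort _).mpr hb
      rw [add_mul, mul_sub, mul_sub,
        f_mul_Yf_self N a _ hal, f_mul_Yf_self N b _ hbl,
        f_mul_Yf_ne N b a _ hbl (fun h => hab h.symm),
        f_mul_Yf_ne N a b _ hal hab]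
      abel
    · have hb : b ∉ S := fun h => ha (hiff.mpr h)
      rw [Yf_not_mem N a _ (fun h => ha ((Finset.mem_sort _).mp h)),
        Yf_not_mem N b _ (fun h => hb ((Finset.mem_sort _).mp h)), sub_zero, mul_zero]
  have hA : ∀ S : Finset (Fin N), a ∈ S → b ∉ S →
      (f N a + f N b) * (Yf N a (S.sort (· ≤ ·)) - Yf N b (S.sort (· ≤ ·)))
        = sgn N a (S.erase a) • ((f N a + f N b) * Pf N ((S.erase a).sort (· ≤ ·))) := by
    intro S ha hb
    have hYa : Yf N a (S.sort (· ≤ ·))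
        = sgn N a (S.erase a) • Pf N ((S.erase a).sort (· ≤ ·)) := by
      conv_lhs => rw [← Finset.insert_erase ha]
      exact Yf_ins_finset N a _ (Finset.notMem_erase a S)
    rw [hYa, Yf_not_mem N b _ (fun h => hb ((Finset.mem_sort _).mp h)), sub_zero, mul_smul_comm]
  have hB : ∀ S : Finset (Fin N), b ∈ S → a ∉ S →
      (f N a + f N b) * (Yf N a (S.sort (· ≤ ·)) - Yf N b (S.sort (· ≤ ·)))
        = -(sgn N b (S.erase b) • ((f N a + f N b) * Pf N ((S.erase b).sort (· ≤ ·)))) := by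
    intro S hb ha
    have hYb : Yf N b (S.sort (· ≤ ·))
        = sgn N b (S.erase b) • Pf N ((S.erase b).sort (· ≤ ·)) := by
      conv_lhs => rw [← Finset.insert_erase hb]
      exact Yf_ins_finset N b _ (Finset.notMem_erase b S)
    rw [hYb, Yf_not_mem N a _ (fun h => ha ((Finset.mem_sort _).mp h)), zero_sub, mul_neg,
      mul_smul_comm]
  have hsplit : ∑ S ∈ Finset.univ.powersetCard m,
        ((f N a + f N b) * (Yf N a (S.sort (· ≤ ·)) - Yf N b (S.sort (· ≤ ·))))
      = (∑ S ∈ (Finset.univ.powersetCard m).filter (fun S => a ∈ S ∧ b ∉ S),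
          ((f N a + f N b) * (Yf N a (S.sort (· ≤ ·)) - Yf N b (S.sort (· ≤ ·)))))
      + ∑ S ∈ (Finset.univ.powersetCard m).filter (fun S => b ∈ S ∧ a ∉ S),
          ((f N a + f N b) * (Yf N a (S.sort (· ≤ ·)) - Yf N b (S.sort (· ≤ ·)))) := by
    rw [← Finset.sum_filter_add_sum_filter_not (Finset.univ.powersetCard m)
      (fun S => a ∈ S ∧ b ∉ S)]
    congr 1
    rw [← Finset.sum_filter_add_sum_filter_not
      ((Finset.univ.powersetCard m).filter (fun S => ¬(a ∈ S ∧ b ∉ S)))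
      (fun S => b ∈ S ∧ a ∉ S)]
    have hzero : ∑ S ∈ ((Finset.univ.powersetCard m).filter
          (fun S => ¬(a ∈ S ∧ b ∉ S))).filter (fun S => ¬(b ∈ S ∧ a ∉ S)),
        ((f N a + f N b) * (Yf N a (S.sort (· ≤ ·)) - Yf N b (S.sort (· ≤ ·)))) = 0 := by
      refine Finset.sum_eq_zero fun S hS => ?_
      simp only [Finset.mem_filter] at hS
      exact hz S (by tauto)
    rw [hzero, add_zero, Finset.filter_filter]
    congr 1
    ext S
    simp only [Finset.mem_filter]
    tauto
  have hsumA : ∑ S ∈ (Finset.univ.powersetCard m).filter (fun S => a ∈ S ∧ b ∉ S),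
        ((f N a + f N b) * (Yf N a (S.sort (· ≤ ·)) - Yf N b (S.sort (· ≤ ·))))
      = ∑ K ∈ (Finset.univ.powersetCard (m - 1)).filter (fun K => a ∉ K ∧ b ∉ K),
          sgn N a K • ((f N a + f N b) * Pf N (K.sort (· ≤ ·))) := by
    refine Finset.sum_nbij' (fun S => S.erase a) (fun K => insert a K) ?_ ?_ ?_ ?_ ?_
    · intro S hS
      simp only [Finset.mem_filter, Finset.mem_powersetCard] at hS ⊢
      obtain ⟨⟨-, hcard⟩, haS, hbS⟩ := hS
      refine ⟨⟨Finset.subset_univ _, ?_⟩, Finset.notMem_erase a S, ?_⟩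
      · rw [Finset.card_erase_of_mem haS, hcard]
      · simp [Finset.mem_erase, hbS]
    · intro K hK
      simp only [Finset.mem_filter, Finset.mem_powersetCard] at hK ⊢
      obtain ⟨⟨-, hcard⟩, haK, hbK⟩ := hK
      refine ⟨⟨Finset.subset_univ _, ?_⟩, Finset.mem_insert_self a K, ?_⟩
      · rw [Finset.card_insert_of_notMem haK, hcard]
        omega
      · simp only [Finset.mem_insert, not_or]
        exact ⟨fun h => hab h.symm, hbK⟩
    · intro S hS
      simp only [Finset.mem_filter] at hS
      exact Finset.insert_erase hS.2.1
    · intro K hK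
      simp only [Finset.mem_filter] at hK
      exact Finset.erase_insert hK.2.1
    · intro S hS
      simp only [Finset.mem_filter] at hS
      exact hA S hS.2.1 hS.2.2
  have hsumB : ∑ S ∈ (Finset.univ.powersetCard m).filter (fun S => b ∈ S ∧ a ∉ S),
        ((f N a + f N b) * (Yf N a (S.sort (· ≤ ·)) - Yf N b (S.sort (· ≤ ·))))
      = ∑ K ∈ (Finset.univ.powersetCard (m - 1)).filter (fun K => a ∉ K ∧ b ∉ K),
          -(sgn N b K • ((f N a + f N b) * Pf N (K.sort (· ≤ ·)))) := by
    refine Finset.sum_nbij' (fun S => S.erase b) (fun K => insert b K) ?_ ?_ ?_ ?_ ?_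
    · intro S hS
      simp only [Finset.mem_filter, Finset.mem_powersetCard] at hS ⊢
      obtain ⟨⟨-, hcard⟩, hbS, haS⟩ := hS
      refine ⟨⟨Finset.subset_univ _, ?_⟩, ?_, Finset.notMem_erase b S⟩
      · rw [Finset.card_erase_of_mem hbS, hcard]
      · simp [Finset.mem_erase, haS]
    · intro K hK
      simp only [Finset.mem_filter, Finset.mem_powersetCard] at hK ⊢
      obtain ⟨⟨-, hcard⟩, haK, hbK⟩ := hK
      refine ⟨⟨Finset.subset_univ _, ?_⟩, Finset.mem_insert_self b K, ?_⟩
      · rw [Finset.card_insert_of_notMem hbK, hcard]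
        omega
      · simp only [Finset.mem_insert, not_or]
        exact ⟨hab, haK⟩
    · intro S hS
      simp only [Finset.mem_filter] at hS
      exact Finset.insert_erase hS.2.1
    · intro K hK
      simp only [Finset.mem_filter] at hK
      exact Finset.erase_insert hK.2.2
    · intro S hS
      simp only [Finset.mem_filter] at hS
      exact hB S hS.2.1 hS.2.2
  rw [hsplit, hsumA, hsumB, ← Finset.sum_add_distrib]
  refine Finset.sum_eq_zero fun K hK => ?_
  simp only [Finset.mem_filter, Finset.mem_powersetCard] at hK
  rw [Hσ K hK.1.2 hK.2.1 hK.2.2]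
  exact add_neg_cancel _
/-! ### Commutation of `e j` with `Fg` -/

lemma fd_swap' (k : Fin N) (l : List (Fin N)) :
    Pd N l * fd N k = ((-1 : ℂ) ^ l.length) • (fd N k * Pd N l) := by
  rw [fd_swap, smul_smul, ← pow_add, ← two_mul, pow_mul, neg_one_sq, one_pow, one_smul]

lemma v_der (a b : Fin N) (l : List (Fin N)) :
    (fd N a + fd N b) * Pf N l = ((-1 : ℂ) ^ l.length) • (Pf N l * (fd N a + fd N b))
      + ((-1 : ℂ) ^ ((a : ℕ) + 1)) • Yf N a l + ((-1 : ℂ) ^ ((b : ℕ) + 1)) • Yf N b l := by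
  rw [add_mul, fd_der, fd_der]
  simp only [mul_add, smul_add]
  abel

lemma uvP (a b : Fin N) (hsb : ((-1 : ℂ)) ^ ((b : ℕ) + 1) = -((-1 : ℂ)) ^ ((a : ℕ) + 1))
    (l : List (Fin N)) :
    (f N a + f N b) * (fd N a + fd N b) * Pf N l
      = Pf N l * ((f N a + f N b) * (fd N a + fd N b))
        + ((-1 : ℂ) ^ ((a : ℕ) + 1)) •
            ((f N a + f N b) * (Yf N a l - Yf N b l)) := by
  have hu : (f N a + f N b) * Pf N l
      = ((-1 : ℂ) ^ l.length) • (Pf N l * (f N a + f N b)) := by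
    rw [add_mul, f_swap, f_swap, mul_add, smul_add]
  rw [mul_assoc, v_der N a b l, hsb]
  rw [mul_add, mul_add, mul_smul_comm, mul_smul_comm, mul_smul_comm, ← mul_assoc, hu,
    smul_mul_assoc, smul_smul, ← pow_add, ← two_mul, pow_mul, neg_one_sq, one_pow, one_smul,
    mul_assoc]
  simp only [mul_sub, smul_sub, neg_smul]
  abel

lemma e_Fg_comm (j : Fin N) (m : ℕ) (hm : 1 ≤ m) (hab : j ≠ fsucc j)
    (hsb : ((-1 : ℂ)) ^ (((fsucc j : Fin N) : ℕ) + 1) = -((-1 : ℂ)) ^ ((j : ℕ) + 1))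
    (Hσ : ∀ K : Finset (Fin N), K.card = m - 1 → j ∉ K → fsucc j ∉ K →
      sgn N j K = sgn N (fsucc j) K) :
    e N j * Fg N m = Fg N m * e N j := by
  have hFg : Fg N m = ∑ S ∈ Finset.univ.powersetCard m, Pf N (S.sort (· ≤ ·)) := rfl
  rw [e, hFg, Finset.mul_sum, Finset.sum_mul]
  rw [Finset.sum_congr rfl (fun S _ => uvP N j (fsucc j) hsb (S.sort (· ≤ ·)))]
  rw [Finset.sum_add_distrib, ← Finset.smul_sum, main_sum N m hm j (fsucc j) hab Hσ,
    smul_zero, add_zero]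

/-! ### Hypotheses on the cyclic successor -/

lemma fsucc_ne (hN : 2 ≤ N) (j : Fin N) : j ≠ fsucc j := by
  intro h
  have hv : (j : ℕ) = ((j : ℕ) + 1) % N := congrArg Fin.val h
  by_cases hlt : (j : ℕ) + 1 < N
  · rw [Nat.mod_eq_of_lt hlt] at hv; omega
  · have hj1 : (j : ℕ) + 1 = N := by have := j.isLt; omega
    rw [hj1, Nat.mod_self] at hv; omega

lemma fsucc_val_lt (j : Fin N) (hlt : (j : ℕ) + 1 < N) : ((fsucc j : Fin N) : ℕ) = (j : ℕ) + 1 :=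
  Nat.mod_eq_of_lt hlt

lemma fsucc_val_wrap (j : Fin N) (heq : (j : ℕ) + 1 = N) : ((fsucc j : Fin N) : ℕ) = 0 := by
  show ((j : ℕ) + 1) % N = 0
  rw [heq, Nat.mod_self]

lemma s_fsucc (hN : Even N) (j : Fin N) :
    ((-1 : ℂ)) ^ (((fsucc j : Fin N) : ℕ) + 1) = -((-1 : ℂ)) ^ ((j : ℕ) + 1) := by
  by_cases hlt : (j : ℕ) + 1 < N
  · rw [fsucc_val_lt N j hlt, pow_succ, mul_neg_one]
  · have hj1 : (j : ℕ) + 1 = N := by have := j.isLt; omega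
    rw [fsucc_val_wrap N j hj1, pow_one, hj1, hN.neg_one_pow]

lemma Hsigma (j : Fin N) (K : Finset (Fin N)) (hK : Even K.card) (hj : j ∉ K)
    (hj' : fsucc j ∉ K) : sgn N j K = sgn N (fsucc j) K := by
  by_cases hlt : (j : ℕ) + 1 < N
  · have hfil : (K.sort (· ≤ ·)).filter (fun x => decide (x < fsucc j))
        = (K.sort (· ≤ ·)).filter (fun x => decide (x < j)) := by
      refine List.filter_congr fun x hx => ?_
      have hxK : x ∈ K := (Finset.mem_sort _).mp hx
      have hxj : (x : ℕ) ≠ (j : ℕ) := fun h => hj (by rwa [show x = j from Fin.ext h] at hxK)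
      apply decide_eq_decide.mpr
      rw [Fin.lt_def, Fin.lt_def, fsucc_val_lt N j hlt]
      omega
    rw [sgn, sgn, hfil]
  · have hj1 : (j : ℕ) + 1 = N := by have := j.isLt; omega
    have hfil1 : (K.sort (· ≤ ·)).filter (fun x => decide (x < fsucc j)) = [] := by
      rw [List.filter_eq_nil_iff]
      intro x hx
      simp only [decide_eq_true_eq]
      rw [Fin.lt_def, fsucc_val_wrap N j hj1]
      omega
    have hfil2 : (K.sort (· ≤ ·)).filter (fun x => decide (x < j)) = K.sort (· ≤ ·) := by
      rw [List.filter_eq_self]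
      intro x hx
      have hxK : x ∈ K := (Finset.mem_sort _).mp hx
      have hxj : (x : ℕ) ≠ (j : ℕ) := fun h => hj (by rwa [show x = j from Fin.ext h] at hxK)
      simp only [decide_eq_true_eq]
      rw [Fin.lt_def]
      have := x.isLt
      omega
    rw [sgn, sgn, hfil1, hfil2, List.length_nil, pow_zero, Finset.length_sort,
      hK.neg_one_pow]

/-! ### The top product annihilates `e j` -/

lemma Fg_top : Fg N N = Pf N (Finset.univ.sort (· ≤ ·)) := by
  have hcard : (Finset.univ : Finset (Fin N)).card = N := by simp
  have hpc : (Finset.univ : Finset (Fin N)).powersetCard N = {Finset.univ} := by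
    have h := Finset.powersetCard_self (Finset.univ : Finset (Fin N))
    rwa [hcard] at h
  rw [Fg, hpc, Finset.sum_singleton]
  rfl

lemma e_Fg_top_left (hN : Even N) (j : Fin N) : e N j * Fg N N = 0 := by
  rw [Fg_top, e, mul_assoc, v_der N j (fsucc j), s_fsucc N hN j]
  have hjl : j ∈ Finset.univ.sort (· ≤ ·) := (Finset.mem_sort _).mpr (Finset.mem_univ j)
  have hbl : fsucc j ∈ Finset.univ.sort (· ≤ ·) := (Finset.mem_sort _).mpr (Finset.mem_univ _)
  have huP : (f N j + f N (fsucc j)) * Pf N (Finset.univ.sort (· ≤ ·)) = 0 := by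
    rw [add_mul, f_mem_left N _ _ hjl, f_mem_left N _ _ hbl, add_zero]
  have hab : j ≠ fsucc j := fsucc_ne N (by
    rcases hN with ⟨t, ht⟩
    have := j.pos
    omega) j
  have huYa : (f N j + f N (fsucc j)) * Yf N j (Finset.univ.sort (· ≤ ·))
      = Pf N (Finset.univ.sort (· ≤ ·)) := by
    rw [add_mul, f_mul_Yf_self N j _ hjl, f_mul_Yf_ne N (fsucc j) j _ hbl (fun h => hab h.symm),
      add_zero]
  have huYb : (f N j + f N (fsucc j)) * Yf N (fsucc j) (Finset.univ.sort (· ≤ ·))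
      = Pf N (Finset.univ.sort (· ≤ ·)) := by
    rw [add_mul, f_mul_Yf_self N _ _ hbl, f_mul_Yf_ne N j (fsucc j) _ hjl hab, zero_add]
  rw [mul_add, mul_add, mul_smul_comm, mul_smul_comm, mul_smul_comm, ← mul_assoc, huP,
    zero_mul, smul_zero, huYa, huYb, zero_add, neg_smul, add_neg_cancel]

lemma e_Fg_top_right (j : Fin N) : Fg N N * e N j = 0 := by
  rw [Fg_top, e, ← mul_assoc]
  have hjl : j ∈ Finset.univ.sort (· ≤ ·) := (Finset.mem_sort _).mpr (Finset.mem_univ j)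
  have hbl : fsucc j ∈ Finset.univ.sort (· ≤ ·) := (Finset.mem_sort _).mpr (Finset.mem_univ _)
  have hPu : Pf N (Finset.univ.sort (· ≤ ·)) * (f N j + f N (fsucc j)) = 0 := by
    rw [mul_add, f_mem_right N _ _ hjl, f_mem_right N _ _ hbl, add_zero]
  rw [hPu, zero_mul]
/-! ### Transpose relations for `Fg`, `Fdg` and `e` -/

lemma Pd_rev (l : List (Fin N)) :
    Pd N l.reverse = ((-1 : ℂ) ^ (l.length.choose 2)) • Pd N l := by
  induction l with
  | nil => simp
  | cons a l ih =>
      rw [List.reverse_cons]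
      have happ : Pd N (l.reverse ++ [a]) = Pd N l.reverse * Pd N [a] := by
        rw [Pd, Pd, Pd, List.map_append, List.prod_append]
      rw [happ, ih, Pd_cons, Pd_nil, mul_one, smul_mul_assoc, fd_swap', smul_smul, ← pow_add,
        Pd_cons, List.length_cons]
      have hexp : (l.length + 1).choose 2 = l.length.choose 2 + l.length := by
        simp [Nat.choose_succ_succ, Nat.choose_one_right, Nat.add_comm]
      rw [hexp]

lemma Fg_transpose (m : ℕ) : (Fg N m)ᵀ = ((-1 : ℂ) ^ (m.choose 2)) • Fdg N m := by
  rw [Fg, Fdg, Matrix.transpose_sum, Finset.smul_sum]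
  refine Finset.sum_congr rfl fun S hS => ?_
  have hcard : S.card = m := ((Finset.mem_powersetCard).mp hS).2
  rw [Matrix.transpose_list_prod, List.map_map]
  have h1 : (S.sort (· ≤ ·)).map (Matrix.transpose ∘ f N) = (S.sort (· ≤ ·)).map (fd N) :=
    List.map_congr_left fun k _ => f_transpose N k
  rw [h1]
  have h2 : ((S.sort (· ≤ ·)).map (fd N)).reverse = ((S.sort (· ≤ ·)).reverse).map (fd N) :=
    List.map_reverse.symm
  rw [h2]
  have h3 : (((S.sort (· ≤ ·)).reverse).map (fd N)).prod = Pd N ((S.sort (· ≤ ·)).reverse) := rfl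
  rw [h3, Pd_rev, Finset.length_sort, hcard]
  rfl

lemma Fdg_eq (m : ℕ) : Fdg N m = ((-1 : ℂ) ^ (m.choose 2)) • (Fg N m)ᵀ := by
  rw [Fg_transpose, smul_smul, ← pow_add, ← two_mul, pow_mul, neg_one_sq, one_pow, one_smul]

lemma e_transpose (j : Fin N) : (e N j)ᵀ = e N j := by
  rw [e, Matrix.transpose_mul, Matrix.transpose_add, Matrix.transpose_add, f_transpose,
    f_transpose, fd_transpose, fd_transpose]

lemma e_Fdg_comm (j : Fin N) (m : ℕ) (h : e N j * Fg N m = Fg N m * e N j) :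
    e N j * Fdg N m = Fdg N m * e N j := by
  rw [Fdg_eq, mul_smul_comm, smul_mul_assoc]
  congr 1
  calc e N j * (Fg N m)ᵀ = (e N j)ᵀ * (Fg N m)ᵀ := by rw [e_transpose]
    _ = (Fg N m * e N j)ᵀ := (Matrix.transpose_mul _ _).symm
    _ = (e N j * Fg N m)ᵀ := by rw [h]
    _ = (Fg N m)ᵀ * (e N j)ᵀ := Matrix.transpose_mul _ _
    _ = (Fg N m)ᵀ * e N j := by rw [e_transpose]

lemma e_Fdg_top_left (j : Fin N) (h : Fg N N * e N j = 0) : e N j * Fdg N N = 0 := by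
  rw [Fdg_eq, mul_smul_comm]
  have h2 : e N j * (Fg N N)ᵀ = 0 := by
    rw [← e_transpose, ← Matrix.transpose_mul, h, Matrix.transpose_zero]
  rw [h2, smul_zero]

lemma e_Fdg_top_right (j : Fin N) (h : e N j * Fg N N = 0) : Fdg N N * e N j = 0 := by
  rw [Fdg_eq, smul_mul_assoc]
  have h2 : (Fg N N)ᵀ * e N j = 0 := by
    rw [← e_transpose, ← Matrix.transpose_mul, h, Matrix.transpose_zero]
  rw [h2, smul_zero]

/-- **The odd fermionic symmetry generators commute with the periodic
Temperley–Lieb algebra:** for every `n ≥ 0` with `2n+1 ≤ N` and every `j`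
(periodic convention), `[e_j, F_(2n+1)] = 0 = [e_j, F†_(2n+1)]`; moreover the
top products `F_(N) = f_1⋯f_N` and `F†_(N) = f_1†⋯f_N†` annihilate every `e_j`
from both sides. -/
theorem gl11_odd_generators_commute_with_periodic_TL (L : ℕ) (hL : 0 < L) :
    (∀ n : ℕ, 2 * n + 1 ≤ 2 * L → ∀ j : Fin (2 * L),
      ⁅e (2 * L) j, Fg (2 * L) (2 * n + 1)⁆ = 0 ∧
      ⁅e (2 * L) j, Fdg (2 * L) (2 * n + 1)⁆ = 0) ∧
    (∀ j : Fin (2 * L),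
      e (2 * L) j * Fg (2 * L) (2 * L) = 0 ∧ Fg (2 * L) (2 * L) * e (2 * L) j = 0 ∧
      e (2 * L) j * Fdg (2 * L) (2 * L) = 0 ∧ Fdg (2 * L) (2 * L) * e (2 * L) j = 0) := by
  have hN2 : 2 ≤ 2 * L := by omega
  have hNe : Even (2 * L) := ⟨L, (two_mul L)⟩
  constructor
  · intro n hn j
    have hcomm : e (2 * L) j * Fg (2 * L) (2 * n + 1) = Fg (2 * L) (2 * n + 1) * e (2 * L) j := by
      refine e_Fg_comm (2 * L) j (2 * n + 1) (by omega) (fsucc_ne (2 * L) hN2 j)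
        (s_fsucc (2 * L) hNe j) ?_
      intro K hcard hj hj'
      exact Hsigma (2 * L) j K (by rw [hcard]; exact ⟨n, by omega⟩) hj hj'
    constructor
    · rw [Ring.lie_def, hcomm, sub_self]
    · rw [Ring.lie_def, e_Fdg_comm (2 * L) j (2 * n + 1) hcomm, sub_self]
  · intro j
    have h1 : e (2 * L) j * Fg (2 * L) (2 * L) = 0 := e_Fg_top_left (2 * L) hNe j
    have h2 : Fg (2 * L) (2 * L) * e (2 * L) j = 0 := e_Fg_top_right (2 * L) j
    exact ⟨h1, h2, e_Fdg_top_left (2 * L) j h2, e_Fdg_top_right (2 * L) j h1⟩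

end SpinChain

end
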